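/- Let 0 < δ < 1/2 and 0 < ε < 1, and let X, X' be n×p real matrices that differ only in their first row, with Δ = X' − X ≠ 0. Consider the mechanism Y(X) = X + C where C is an n×p matrix of i.i.d. N(0, σ²) entries, and let S̄_{X,X'} = {y : p_{Y(X)}(y) > e^ε p_{Y(X')}(y)}. If P[Y(X) ∈ S̄_{X,X'}] ≤ δ, then necessarily σ ≥ ‖Δ‖ γ̄_δ / ε, where γ̄_δ is the upper δ-quantile of N(0,1) and ‖·‖ is the Frobenius norm. -/

import Mathlib

open MeasureTheory ProbabilityTheory Real
open scoped ENNReal NNReal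

noncomputable section

/-- The space of n×p real data matrices, represented as functions. -/
abbrev Mat (n p : ℕ) := Fin n → Fin p → ℝ

/-- Frobenius (L₂) norm of a matrix. -/
def frob {n p : ℕ} (M : Mat n p) : ℝ := Real.sqrt (∑ i, ∑ j, (M i j) ^ 2)

/-- The distribution of an n×p matrix of i.i.d. N(0, σ²) entries. -/
def gaussNoise (n p : ℕ) (σ : ℝ) : Measure (Mat n p) :=
  Measure.pi fun _ => Measure.pi fun _ => gaussianReal 0 ⟨σ ^ 2, sq_nonneg σ⟩

/-- Matrix product. -/
def mdot {n p m : ℕ} (A : Fin n → Fin p → ℝ) (B : Fin p → Fin m → ℝ) :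
    Fin n → Fin m → ℝ := fun i j => ∑ k, A i k * B k j

/-- Matrix transpose. -/
def transp {n p : ℕ} (M : Mat n p) : Mat p n := fun j i => M i j

/-- Trace of a square matrix. -/
def trace' {n : ℕ} (T : Mat n n) : ℝ := ∑ i, T i i

/-- `A` is an orthogonal matrix: A Aᵀ = I. -/
def IsOrth {n : ℕ} (A : Mat n n) : Prop :=
  mdot A (transp A) = fun i j => if i = j then (1 : ℝ) else 0

/-- Neighboring data sets: they differ in only one row and the Frobenius
norm of the difference is at most 1. -/
def Neighbors {n p : ℕ} (X X' : Mat n p) : Prop :=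
  (∃ i, ∀ k, k ≠ i → X k = X' k) ∧ frob (X - X') ≤ 1

/-- `μ` is the Haar (uniform) probability distribution on the orthogonal group O(n):
a probability measure supported on orthogonal matrices that is invariant under
left translation by any orthogonal matrix. -/
def IsHaarOrth {n : ℕ} (μ : Measure (Mat n n)) : Prop :=
  IsProbabilityMeasure μ ∧ μ {A | IsOrth A}ᶜ = 0 ∧
    ∀ Q : Mat n n, IsOrth Q → μ.map (fun A => mdot Q A) = μ

/-- The density at `y` of the Gaussian mechanism `X + C`, where `C` has
i.i.d. N(0, σ²) entries: `(2πσ²)^{−np/2} exp(−‖y − X‖²/(2σ²))`. -/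
def gaussDens {n p : ℕ} (σ : ℝ) (X y : Mat n p) : ℝ :=
  (2 * π * σ ^ 2) ^ (-(n * p : ℝ) / 2) * Real.exp (-(frob (y - X) ^ 2) / (2 * σ ^ 2))
/-- The law of the mechanism `Y(X) = X + C` (setting (A)). -/
def lawA {n p : ℕ} (σ : ℝ) (X : Mat n p) : Measure (Mat n p) :=
  (gaussNoise n p σ).map (fun c => X + c)



namespace Stmt7Aux

lemma gaussAux {v₁ v₂ : ℝ≥0} (h₁ : v₁ ≠ 0) (h₂ : v₂ ≠ 0) (y x : ℝ) :
    gaussianPDFReal 0 v₁ x * gaussianPDFReal 0 v₂ (y - x)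
      = gaussianPDFReal 0 (v₁ + v₂) y *
        gaussianPDFReal ((v₁ : ℝ) * y / ((v₁ : ℝ) + (v₂ : ℝ))) (v₁ * v₂ / (v₁ + v₂)) x := by
  have ha : (0:ℝ) < (v₁ : ℝ) := by exact_mod_cast pos_iff_ne_zero.mpr h₁
  have hb : (0:ℝ) < (v₂ : ℝ) := by exact_mod_cast pos_iff_ne_zero.mpr h₂
  have hab : (0:ℝ) < (v₁ : ℝ) + (v₂ : ℝ) := by linarith
  simp only [gaussianPDFReal, NNReal.coe_add, NNReal.coe_div, NNReal.coe_mul]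
  rw [mul_mul_mul_comm, mul_mul_mul_comm (√(2 * π * ((v₁:ℝ) + (v₂:ℝ))))⁻¹]
  congr 1
  · rw [← mul_inv, ← mul_inv, ← Real.sqrt_mul (by positivity), ← Real.sqrt_mul (by positivity)]
    congr 1
    field_simp
  · rw [← Real.exp_add, ← Real.exp_add]
    congr 1
    field_simp
    ring

end Stmt7Aux

namespace Stmt7Aux

lemma gauss_conv (v₁ v₂ : ℝ≥0) :
    ((gaussianReal 0 v₁).prod (gaussianReal 0 v₂)).map (fun z : ℝ × ℝ => z.1 + z.2)
      = gaussianReal 0 (v₁ + v₂) := by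
  by_cases h₁ : v₁ = 0
  · subst h₁
    rw [zero_add, gaussianReal_zero_var, Measure.dirac_prod,
      Measure.map_map (by fun_prop) (by fun_prop)]
    simp [Function.comp_def]
  by_cases h₂ : v₂ = 0
  · subst h₂
    rw [add_zero, gaussianReal_zero_var, Measure.prod_dirac,
      Measure.map_map (by fun_prop) (by fun_prop)]
    simp [Function.comp_def]
  have h₁₂ : v₁ + v₂ ≠ 0 := by simp [h₁]
  set w : ℝ≥0 := v₁ * v₂ / (v₁ + v₂) with hw
  have hwne : w ≠ 0 := by
    simp only [hw, ne_eq, div_eq_zero_iff, mul_eq_zero]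
    push_neg
    exact ⟨⟨h₁, h₂⟩, h₁₂⟩
  ext s hs
  have hadd : Measurable (fun z : ℝ × ℝ => z.1 + z.2) := by fun_prop
  rw [Measure.map_apply hadd hs, gaussianReal_apply 0 h₁₂ s]
  set g : ℝ → ℝ≥0∞ := s.indicator 1 with hg
  have hgmeas : Measurable g := measurable_one.indicator hs
  have hpre : MeasurableSet ((fun z : ℝ × ℝ => z.1 + z.2) ⁻¹' s) := hs.preimage hadd
  rw [← lintegral_indicator_one hpre]
  have hind : ∀ z : ℝ × ℝ, Set.indicator ((fun z : ℝ × ℝ => z.1 + z.2) ⁻¹' s)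
      (1 : (ℝ × ℝ) → ℝ≥0∞) z = g (z.1 + z.2) := by
    intro z
    by_cases hz : z.1 + z.2 ∈ s <;> simp [hg, Set.indicator_apply, hz]
  simp_rw [hind]
  rw [gaussianReal_of_var_ne_zero 0 h₁, gaussianReal_of_var_ne_zero 0 h₂]
  rw [lintegral_prod (fun z : ℝ × ℝ => g (z.1 + z.2)) ((hgmeas.comp hadd).aemeasurable)]
  show (∫⁻ x, ∫⁻ y, g (x + y) ∂(volume.withDensity (gaussianPDF 0 v₂))
      ∂(volume.withDensity (gaussianPDF 0 v₁))) = _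
  have houter : Measurable fun x : ℝ =>
      ∫⁻ y, g (x + y) ∂(volume.withDensity (gaussianPDF 0 v₂)) :=
    Measurable.lintegral_prod_right' (f := fun z : ℝ × ℝ => g (z.1 + z.2)) (hgmeas.comp hadd)
  rw [lintegral_withDensity_eq_lintegral_mul _ (measurable_gaussianPDF 0 v₁) houter]
  simp only [Pi.mul_apply]
  have hinner : ∀ x : ℝ, (∫⁻ y, g (x + y) ∂(volume.withDensity (gaussianPDF 0 v₂)))
      = ∫⁻ y, gaussianPDF 0 v₂ (y - x) * g y := by
    intro x
    rw [lintegral_withDensity_eq_lintegral_mul _ (measurable_gaussianPDF 0 v₂)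
      (show Measurable fun y : ℝ => g (x + y) from hgmeas.comp (measurable_const_add x))]
    simp only [Pi.mul_apply]
    have := lintegral_add_right_eq_self (μ := volume) (fun y => gaussianPDF 0 v₂ (y - x) * g y) x
    simp only [add_sub_cancel_right] at this
    rw [← this]
    congr 1
    funext y
    rw [add_comm y x]
  simp_rw [hinner]
  have hmeas2 : Measurable (Function.uncurry fun x y =>
      gaussianPDF 0 v₁ x * (gaussianPDF 0 v₂ (y - x) * g y)) := by
    apply Measurable.mul
    · exact (measurable_gaussianPDF 0 v₁).comp measurable_fst
    · exact Measurable.mul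
        ((measurable_gaussianPDF 0 v₂).comp (measurable_snd.sub measurable_fst))
        (hgmeas.comp measurable_snd)
  calc ∫⁻ x, gaussianPDF 0 v₁ x * ∫⁻ y, gaussianPDF 0 v₂ (y - x) * g y
      = ∫⁻ x, ∫⁻ y, gaussianPDF 0 v₁ x * (gaussianPDF 0 v₂ (y - x) * g y) := by
        congr 1; funext x
        rw [lintegral_const_mul _ (show Measurable fun y : ℝ =>
          gaussianPDF 0 v₂ (y - x) * g y from Measurable.mul
          ((measurable_gaussianPDF 0 v₂).comp (measurable_id.sub measurable_const)) hgmeas)]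
    _ = ∫⁻ y, ∫⁻ x, gaussianPDF 0 v₁ x * (gaussianPDF 0 v₂ (y - x) * g y) :=
        lintegral_lintegral_swap hmeas2.aemeasurable
    _ = ∫⁻ y, (∫⁻ x, gaussianPDF 0 v₁ x * gaussianPDF 0 v₂ (y - x)) * g y := by
        congr 1; funext y
        rw [show (fun x : ℝ => gaussianPDF 0 v₁ x * (gaussianPDF 0 v₂ (y - x) * g y))
            = fun x => (gaussianPDF 0 v₁ x * gaussianPDF 0 v₂ (y - x)) * g y from
          funext fun x => by ring]
        exact lintegral_mul_const _ (show Measurable fun x : ℝ =>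
          gaussianPDF 0 v₁ x * gaussianPDF 0 v₂ (y - x) from
          (measurable_gaussianPDF 0 v₁).mul
            ((measurable_gaussianPDF 0 v₂).comp (measurable_const.sub measurable_id)))
    _ = ∫⁻ y, gaussianPDF 0 (v₁ + v₂) y * g y := by
        congr 1; funext y
        congr 1
        have hpoint : ∀ x : ℝ, gaussianPDF 0 v₁ x * gaussianPDF 0 v₂ (y - x)
            = gaussianPDF 0 (v₁ + v₂) y *
              gaussianPDF ((v₁ : ℝ) * y / ((v₁ : ℝ) + (v₂ : ℝ))) w x := by
          intro x
          simp only [gaussianPDF]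
          rw [← ENNReal.ofReal_mul (gaussianPDFReal_nonneg _ _ _),
            ← ENNReal.ofReal_mul (gaussianPDFReal_nonneg _ _ _), gaussAux h₁ h₂]
        simp_rw [hpoint]
        rw [lintegral_const_mul _ (measurable_gaussianPDF _ _),
          lintegral_gaussianPDF_eq_one _ hwne, mul_one]
    _ = ∫⁻ y in s, gaussianPDF 0 (v₁ + v₂) y := by
        rw [← lintegral_indicator hs (gaussianPDF 0 (v₁ + v₂))]
        congr 1; funext y
        by_cases hy : y ∈ s <;> simp [hg, Set.indicator_apply, hy]

end Stmt7Aux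

namespace Stmt7Aux

lemma msum {k : ℕ} : Measurable (fun y : Fin k → ℝ => ∑ j, y j) :=
  Finset.measurable_sum _ fun j _ => measurable_pi_apply j

lemma pi_map {ι : Type*} [Fintype ι] {α β : ι → Type*}
    [∀ i, MeasurableSpace (α i)] [∀ i, MeasurableSpace (β i)]
    (μ : ∀ i, Measure (α i)) [∀ i, IsProbabilityMeasure (μ i)]
    (f : ∀ i, α i → β i) (hf : ∀ i, Measurable (f i)) :
    (Measure.pi μ).map (fun x i => f i (x i)) = Measure.pi (fun i => (μ i).map (f i)) := by
  haveI : ∀ i, IsProbabilityMeasure ((μ i).map (f i)) :=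
    fun i => Measure.isProbabilityMeasure_map (hf i).aemeasurable
  refine (Measure.pi_eq fun s hs => ?_).symm
  rw [Measure.map_apply (show Measurable fun (x : ∀ i, α i) (i : ι) => f i (x i) from
    measurable_pi_lambda _ fun i => (hf i).comp (measurable_pi_apply i))
    (MeasurableSet.univ_pi hs)]
  have hpre : (fun x i => f i (x i)) ⁻¹' Set.univ.pi s = Set.univ.pi fun i => f i ⁻¹' s i := by
    ext x; simp [Set.mem_pi]
  rw [hpre, Measure.pi_pi]
  exact Finset.prod_congr rfl fun i _ => (Measure.map_apply (hf i) (hs i)).symm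

lemma pi_sum_gauss : ∀ (m : ℕ) (v : Fin m → ℝ≥0),
    (Measure.pi fun i => gaussianReal 0 (v i)).map (fun x => ∑ i, x i)
      = gaussianReal 0 (∑ i, v i) := by
  intro m
  induction m with
  | zero =>
    intro v
    have h0 : (fun x : Fin 0 → ℝ => ∑ i, x i) = fun _ => (0 : ℝ) := by
      funext x; simp
    rw [h0, Measure.map_const, measure_univ, one_smul]
    rw [show (∑ i, v i) = 0 by simp, gaussianReal_zero_var]
  | succ m ih =>
    intro v
    have hmp := measurePreserving_piFinSuccAbove (fun i => gaussianReal 0 (v i)) 0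
    have hT : Measurable (fun z : ℝ × (Fin m → ℝ) => z.1 + ∑ j, z.2 j) :=
      measurable_fst.add (msum.comp measurable_snd)
    have hsum : (fun x : Fin (m + 1) → ℝ => ∑ i, x i)
        = (fun z : ℝ × (Fin m → ℝ) => z.1 + ∑ j, z.2 j)
          ∘ (MeasurableEquiv.piFinSuccAbove (fun _ => ℝ) 0) := by
      funext x
      simp only [Function.comp_apply, MeasurableEquiv.piFinSuccAbove_apply, Fin.removeNth]
      exact Fin.sum_univ_succAbove x 0
    rw [hsum, ← Measure.map_map hT (MeasurableEquiv.measurable _), hmp.map_eq]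
    have hdec : (fun z : ℝ × (Fin m → ℝ) => z.1 + ∑ j, z.2 j)
        = (fun w : ℝ × ℝ => w.1 + w.2) ∘ (Prod.map id fun y : Fin m → ℝ => ∑ j, y j) := rfl
    rw [hdec, ← Measure.map_map (by fun_prop) (measurable_id.prodMap msum),
      ← Measure.map_prod_map _ _ measurable_id msum, Measure.map_id,
      ih (fun j => v (Fin.succAbove 0 j)), gauss_conv, ← Fin.sum_univ_succAbove v 0]

end Stmt7Aux

abbrev Mat' (n p : ℕ) := Fin n → Fin p → ℝ

namespace Stmt7Aux

def nnsq (x : ℝ) : ℝ≥0 := ⟨x ^ 2, sq_nonneg x⟩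

lemma row_law (p : ℕ) (s : ℝ≥0) (w : Fin p → ℝ) :
    (Measure.pi fun _ : Fin p => gaussianReal 0 s).map (fun y => ∑ j, w j * y j)
      = gaussianReal 0 (∑ j, nnsq (w j) * s) := by
  have hcomp : (fun y : Fin p → ℝ => ∑ j, w j * y j)
      = (fun z : Fin p → ℝ => ∑ j, z j) ∘ (fun y j => w j * y j) := rfl
  have hscale : Measurable (fun (y : Fin p → ℝ) (j : Fin p) => w j * y j) :=
    measurable_pi_lambda _ fun j => (measurable_pi_apply j).const_mul _
  rw [hcomp, ← Measure.map_map msum hscale,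
    pi_map (fun _ : Fin p => gaussianReal 0 s) (fun j t => w j * t)
      (fun j => measurable_id.const_mul (w j))]
  have hfam : (fun j : Fin p => (gaussianReal 0 s).map (fun t => w j * t))
      = fun j => gaussianReal 0 (nnsq (w j) * s) := by
    funext j
    rw [gaussianReal_map_const_mul (w j), mul_zero]
    rfl
  rw [hfam, pi_sum_gauss]

lemma mat_law (n p : ℕ) (σ : ℝ) (Δ : Mat' n p) :
    (Measure.pi fun _ : Fin n => Measure.pi fun _ : Fin p =>
        gaussianReal 0 (⟨σ ^ 2, sq_nonneg σ⟩ : ℝ≥0)).map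
        (fun c => ∑ i, ∑ j, Δ i j * c i j)
      = gaussianReal 0 (∑ i, ∑ j, nnsq (Δ i j) * nnsq σ) := by
  set s : ℝ≥0 := (⟨σ ^ 2, sq_nonneg σ⟩ : ℝ≥0) with hs
  have hrow : ∀ i, Measurable (fun y : Fin p → ℝ => ∑ j, Δ i j * y j) :=
    fun i => Finset.measurable_sum _ fun j _ => (measurable_pi_apply j).const_mul _
  have hcomp : (fun c : Mat' n p => ∑ i, ∑ j, Δ i j * c i j)
      = (fun z : Fin n → ℝ => ∑ i, z i) ∘ (fun c i => ∑ j, Δ i j * c i j) := rfl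
  have hmid : Measurable (fun (c : Mat' n p) (i : Fin n) => ∑ j, Δ i j * c i j) :=
    measurable_pi_lambda _ fun i => (hrow i).comp (measurable_pi_apply i)
  rw [hcomp, ← Measure.map_map msum hmid,
    pi_map (fun _ : Fin n => Measure.pi fun _ : Fin p => gaussianReal 0 s)
      (fun i y => ∑ j, Δ i j * y j) hrow]
  have hfam : (fun i : Fin n =>
        (Measure.pi fun _ : Fin p => gaussianReal 0 s).map (fun y => ∑ j, Δ i j * y j))
      = fun i => gaussianReal 0 (∑ j, nnsq (Δ i j) * s) :=
    funext fun i => row_law p s (Δ i)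
  rw [hfam, pi_sum_gauss]
  rfl

end Stmt7Aux

namespace Stmt7Aux

lemma gauss_Ioi_strict {a b : ℝ} (hab : a < b) :
    gaussianReal 0 1 (Set.Ioi b) < gaussianReal 0 1 (Set.Ioi a) := by
  have hsplit : Set.Ioc a b ∪ Set.Ioi b = Set.Ioi a := Set.Ioc_union_Ioi_eq_Ioi hab.le
  have hdisj : Disjoint (Set.Ioc a b) (Set.Ioi b) := Set.Ioc_disjoint_Ioi le_rfl
  have hmeas : gaussianReal 0 1 (Set.Ioi a)
      = gaussianReal 0 1 (Set.Ioc a b) + gaussianReal 0 1 (Set.Ioi b) := by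
    rw [← hsplit, measure_union hdisj measurableSet_Ioi]
  have hpos : gaussianReal 0 1 (Set.Ioc a b) ≠ 0 := by
    intro h
    have h2 := gaussianReal_absolutelyContinuous' 0 one_ne_zero h
    rw [Real.volume_Ioc] at h2
    rw [ENNReal.ofReal_eq_zero] at h2
    linarith
  have := ENNReal.lt_add_right (measure_ne_top (gaussianReal 0 1) (Set.Ioi b)) hpos
  rw [hmeas, add_comm]
  exact this

end Stmt7Aux



/-- Let `0 < δ < 1/2`, `0 < ε < 1`, and let `X, X'` differ only in
their first row with `Δ = X' − X ≠ 0`. Consider `Y(X) = X + C` with `C` i.i.d.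
N(0, σ²) entries and `S̄_{X,X'} = {y : p_{Y(X)}(y) > e^ε p_{Y(X')}(y)}`. If
`P[Y(X) ∈ S̄_{X,X'}] ≤ δ`, then necessarily `σ ≥ ‖Δ‖ γ̄_δ / ε`, with `γ̄_δ` the upper
δ-quantile of N(0,1). -/
theorem stmt7 {n p : ℕ} (hn : 0 < n) (σ ε δ γ : ℝ) (hσ : 0 < σ)
    (hδ0 : 0 < δ) (hδ : δ < 1 / 2) (hε0 : 0 < ε) (hε : ε < 1)
    (hγ : gaussianReal 0 1 (Set.Ioi γ) = ENNReal.ofReal δ)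
    (X X' : Mat n p)
    (hrow : ∀ k : Fin n, k ≠ ⟨0, hn⟩ → X k = X' k)
    (hne : X ≠ X')
    (hP : lawA σ X {y | gaussDens σ X y > Real.exp ε * gaussDens σ X' y}
        ≤ ENNReal.ofReal δ) :
    σ ≥ frob (X' - X) * γ / ε := by
  classical
  set Δ : Mat n p := X' - X with hΔ
  set F : ℝ := frob Δ with hF
  have hΔne : Δ ≠ 0 := sub_ne_zero.mpr (Ne.symm hne)
  have hSΔpos : 0 < ∑ i, ∑ j, (Δ i j) ^ 2 := by
    obtain ⟨i, hi⟩ := Function.ne_iff.mp hΔne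
    obtain ⟨j, hj⟩ := Function.ne_iff.mp hi
    have hΔij : Δ i j ≠ 0 := hj
    refine Finset.sum_pos' (fun i _ => Finset.sum_nonneg fun j _ => sq_nonneg _)
      ⟨i, Finset.mem_univ i, ?_⟩
    refine Finset.sum_pos' (fun j _ => sq_nonneg _) ⟨j, Finset.mem_univ j, ?_⟩
    positivity
  have hFsq : F ^ 2 = ∑ i, ∑ j, (Δ i j) ^ 2 := Real.sq_sqrt (le_of_lt hSΔpos)
  have hFpos : 0 < F := Real.sqrt_pos.mpr hSΔpos
  have hentry : ∀ (i : Fin n) (j : Fin p), Measurable fun c : Mat n p => c i j :=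
    fun i j => (measurable_pi_apply j).comp (measurable_pi_apply i)
  set L : Mat n p → ℝ := fun c => ∑ i, ∑ j, Δ i j * c i j with hL
  have hLmeas : Measurable L := Finset.measurable_sum _ fun i _ =>
    Finset.measurable_sum _ fun j _ => (hentry i j).const_mul _
  set sR : ℝ := (F ^ 2 - 2 * ε * σ ^ 2) / 2 with hsR
  -- measurability of the densities
  have hfrob : ∀ W : Mat n p, Measurable fun y : Mat n p => gaussDens σ W y := by
    intro W
    unfold gaussDens frob
    apply Measurable.const_mul
    apply Measurable.exp
    apply Measurable.div_const
    apply Measurable.neg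
    apply Measurable.pow_const
    apply Measurable.sqrt
    apply Finset.measurable_sum
    intro i _
    apply Finset.measurable_sum
    intro j _
    exact ((hentry i j).sub_const (W i j)).pow_const 2
  have hS : MeasurableSet {y : Mat n p | gaussDens σ X y > Real.exp ε * gaussDens σ X' y} :=
    measurableSet_lt ((hfrob X').const_mul _) (hfrob X)
  have hmapmeas : Measurable fun c : Mat n p => X + c :=
    measurable_pi_lambda _ fun i => measurable_pi_lambda _ fun j =>
      (hentry i j).const_add (X i j)
  rw [lawA, Measure.map_apply hmapmeas hS] at hP
  -- rewrite the event
  have hA : (0:ℝ) < (2 * π * σ ^ 2) ^ (-((n : ℝ) * (p : ℝ)) / 2) :=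
    Real.rpow_pos_of_pos (by positivity) _
  have hexpand : ∀ c : Mat n p, frob (c - Δ) ^ 2 = frob c ^ 2 - 2 * L c + F ^ 2 := by
    intro c
    have h1 : ∀ M : Mat n p, frob M ^ 2 = ∑ i, ∑ j, (M i j) ^ 2 := fun M =>
      Real.sq_sqrt (Finset.sum_nonneg fun i _ => Finset.sum_nonneg fun j _ => sq_nonneg _)
    rw [h1, h1, hFsq, hL]
    rw [show (∑ i, ∑ j, ((c - Δ) i j) ^ 2)
        = ∑ i, ∑ j, ((c i j) ^ 2 - 2 * (Δ i j * c i j) + (Δ i j) ^ 2) from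
      Finset.sum_congr rfl fun i _ => Finset.sum_congr rfl fun j _ => by
        simp only [Pi.sub_apply]; ring]
    simp only [Finset.sum_add_distrib, Finset.sum_sub_distrib, ← Finset.mul_sum]
  have hσ2 : (0:ℝ) < 2 * σ ^ 2 := by positivity
  have hset : (fun c : Mat n p => X + c) ⁻¹'
        {y | gaussDens σ X y > Real.exp ε * gaussDens σ X' y} = L ⁻¹' (Set.Iio sR) := by
    ext c
    simp only [Set.mem_preimage, Set.mem_setOf_eq, Set.mem_Iio, gt_iff_lt]
    have e1 : X + c - X = c := by abel
    have e2 : X + c - X' = c - Δ := by rw [hΔ]; abel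
    rw [gaussDens, gaussDens, e1, e2]
    rw [show Real.exp ε * ((2 * π * σ ^ 2) ^ (-((n : ℝ) * (p : ℝ)) / 2)
          * Real.exp (-(frob (c - Δ) ^ 2) / (2 * σ ^ 2)))
        = (2 * π * σ ^ 2) ^ (-((n : ℝ) * (p : ℝ)) / 2)
          * Real.exp (ε + -(frob (c - Δ) ^ 2) / (2 * σ ^ 2)) by
      rw [Real.exp_add]; ring]
    rw [mul_lt_mul_iff_right₀ hA, Real.exp_lt_exp, hexpand c, hsR]
    have hd : ∀ t : ℝ, t / (2 * σ ^ 2) * (2 * σ ^ 2) = t :=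
      fun t => div_mul_cancel₀ t (ne_of_gt hσ2)
    constructor
    · intro h
      have h2 := mul_lt_mul_of_pos_right h hσ2
      rw [add_mul, neg_div, neg_mul, hd, neg_div, neg_mul, hd] at h2
      linarith
    · intro h
      have h2 : (ε + -(frob c ^ 2 - 2 * L c + F ^ 2) / (2 * σ ^ 2)) * (2 * σ ^ 2)
          < -(frob c ^ 2) / (2 * σ ^ 2) * (2 * σ ^ 2) := by
        rw [add_mul, neg_div, neg_mul, hd, neg_div, neg_mul, hd]
        linarith
      exact (mul_lt_mul_iff_left₀ hσ2).mp h2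
  rw [hset] at hP
  -- compute the law of L
  set V : ℝ≥0 := ∑ i, ∑ j, Stmt7Aux.nnsq (Δ i j) * Stmt7Aux.nnsq σ with hVdef
  set τ : ℝ := σ * F with hτdef
  have hτ : 0 < τ := mul_pos hσ hFpos
  have hVcoe : (V : ℝ) = τ ^ 2 := by
    have h0 : (V : ℝ) = ∑ i, ∑ j, (Δ i j) ^ 2 * σ ^ 2 := by
      rw [hVdef]
      push_cast [Stmt7Aux.nnsq]
      rfl
    rw [h0, hτdef, mul_pow, hFsq, Finset.mul_sum]
    refine Finset.sum_congr rfl fun i _ => ?_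
    rw [Finset.mul_sum]
    refine Finset.sum_congr rfl fun j _ => by ring
  have hVτ : V = ⟨τ ^ 2, sq_nonneg τ⟩ := NNReal.coe_injective (hVcoe.trans rfl)
  have hmapV : gaussianReal 0 V = (gaussianReal 0 1).map (fun x => τ * x) := by
    rw [gaussianReal_map_const_mul τ, mul_zero, mul_one, hVτ]
    rfl
  have e3 : gaussNoise n p σ (L ⁻¹' Set.Iio sR)
      = gaussianReal 0 1 (Set.Ioi (-(sR / τ))) := by
    rw [← Measure.map_apply hLmeas measurableSet_Iio]
    rw [show (gaussNoise n p σ).map L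
        = (Measure.pi fun _ : Fin n => Measure.pi fun _ : Fin p =>
            gaussianReal 0 (⟨σ ^ 2, sq_nonneg σ⟩ : ℝ≥0)).map
          (fun c => ∑ i, ∑ j, Δ i j * c i j) from rfl]
    rw [Stmt7Aux.mat_law n p σ Δ, ← hVdef, hmapV,
      Measure.map_apply (measurable_const_mul τ) measurableSet_Iio]
    have hpre : (fun x : ℝ => τ * x) ⁻¹' Set.Iio sR = Set.Iio (sR / τ) := by
      ext x
      simp only [Set.mem_preimage, Set.mem_Iio]
      rw [← lt_div_iff₀' hτ]
    rw [hpre]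
    -- symmetry
    have hm : Measure.map (fun x : ℝ => (-1 : ℝ) * x) (gaussianReal 0 1) = gaussianReal 0 1 := by
      rw [gaussianReal_map_const_mul, mul_zero, mul_one]
      congr 1
      exact NNReal.coe_injective (by norm_num)
    conv_lhs => rw [← hm]
    rw [Measure.map_apply (measurable_const_mul _) measurableSet_Iio]
    congr 1
    ext x
    simp only [Set.mem_preimage, Set.mem_Iio, Set.mem_Ioi, neg_one_mul, neg_lt]
  rw [e3, ← hγ] at hP
  have hγle : γ ≤ -(sR / τ) := by
    by_contra hlt
    push_neg at hlt
    exact absurd hP (not_le.mpr (Stmt7Aux.gauss_Ioi_strict hlt))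
  have h1 : γ * τ ≤ -sR := by
    have h := mul_le_mul_of_nonneg_right hγle (le_of_lt hτ)
    calc γ * τ ≤ -(sR / τ) * τ := h
      _ = -sR := by field_simp
  rw [hτdef, hsR] at h1
  rw [ge_iff_le, div_le_iff₀ hε0]
  have h3 : σ * (F * γ) ≤ σ * (σ * ε) := by nlinarith [h1, sq_nonneg F]
  have := (mul_le_mul_iff_right₀ hσ).mp h3
  linarith
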